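/- arXiv:2504.11217 — 2 statements merged into one kernel-verified Lean document; each statement's English description precedes it below -/
import Mathlib

section
/- If a₍₁₎ ≥ a₍₂₎ ≥ … ≥ a₍N₎ ≥ 0 is a nonincreasing rearrangement of nonnegative reals a₁,…,aN, then for any 0 < r ≤ p and any 0 ≤ n ≤ N−1, ∑_{k=n+1}^{N} a₍ₖ₎^p ≤ (∑_{i=1}^{N} a_i^r)^{p/r} · (n+1)^{1 − p/r}. -/
open Real Finset

/-- Rearrangement lemma: if `a : Fin N → ℝ` is nonnegative and nonincreasing,
then for `0 < r ≤ p` and `0 ≤ n ≤ N−1`,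
`∑_{k ≥ n} a k ^ p ≤ (∑ i a i ^ r)^{p/r} (n+1)^{1 − p/r}`
(the sum on the left ranges over the positions `n+1,…,N` in 1-based indexing). -/
theorem stmt3 (N : ℕ) (a : Fin N → ℝ) (ha : ∀ i, 0 ≤ a i)
    (hmono : ∀ i j : Fin N, i ≤ j → a j ≤ a i)
    (r p : ℝ) (hr : 0 < r) (hrp : r ≤ p) (n : ℕ) (hn : n ≤ N - 1) :
    ∑ k ∈ univ.filter (fun k : Fin N => n ≤ (k : ℕ)), a k ^ p ≤
      (∑ i, a i ^ r) ^ (p / r) * ((n : ℝ) + 1) ^ (1 - p / r) := by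
  have hp : 0 < p := lt_of_lt_of_le hr hrp
  have hpr : 0 < p / r := div_pos hp hr
  set S := ∑ i, a i ^ r with hSdef
  have hS0 : 0 ≤ S := Finset.sum_nonneg fun i _ => Real.rpow_nonneg (ha i) r
  have hn1 : (0:ℝ) < (n:ℝ) + 1 := by positivity
  rcases eq_or_lt_of_le hS0 with hS | hS
  · -- S = 0 : all a i = 0
    have hz : ∀ i : Fin N, a i = 0 := by
      intro i
      have h1 := (Finset.sum_eq_zero_iff_of_nonneg
        (fun i _ => Real.rpow_nonneg (ha i) r)).1 hS.symm i (mem_univ i)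
      exact (Real.rpow_eq_zero (ha i) (ne_of_gt hr)).1 h1
    have hL : ∑ k ∈ univ.filter (fun k : Fin N => n ≤ (k : ℕ)), a k ^ p = 0 := by
      apply Finset.sum_eq_zero
      intro k _
      rw [hz k, Real.zero_rpow hp.ne']
    rw [hL, ← hS, Real.zero_rpow hpr.ne', zero_mul]
  · -- S > 0
    have hN : 0 < N := by
      rcases Nat.eq_zero_or_pos N with h | h
      · exfalso; subst h; rw [hSdef] at hS; simp at hS
      · exact h
    have hnN : n < N := by omega
    set m : Fin N := ⟨n, hnN⟩ with hm
    -- (n+1) * a m ^ r ≤ S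
    have hIic : univ.filter (fun i : Fin N => (i:ℕ) ≤ n) = Finset.Iic m := by
      ext i
      simp [Fin.le_def, hm]
    have key : ((n:ℝ) + 1) * a m ^ r ≤ S := by
      have h1 : ((n:ℝ) + 1) * a m ^ r = ∑ _i ∈ Finset.Iic m, a m ^ r := by
        rw [Finset.sum_const, Fin.card_Iic, nsmul_eq_mul]
        push_cast [hm]
        ring
      rw [h1]
      calc ∑ _i ∈ Finset.Iic m, a m ^ r ≤ ∑ i ∈ Finset.Iic m, a i ^ r := by
            apply Finset.sum_le_sum
            intro i hi
            exact Real.rpow_le_rpow (ha m) (hmono i m (Finset.mem_Iic.1 hi)) hr.le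
        _ ≤ S := by
            apply Finset.sum_le_sum_of_subset_of_nonneg (Finset.subset_univ _)
            intro i _ _
            exact Real.rpow_nonneg (ha i) r
    have hdiv : a m ^ r ≤ S / ((n:ℝ) + 1) := by
      rw [le_div_iff₀ hn1]
      linarith [key]
    have hq0 : 0 ≤ (p - r) / r := div_nonneg (by linarith) hr.le
    -- per-term bound
    have hterm : ∀ k : Fin N, k ∈ univ.filter (fun k : Fin N => n ≤ (k : ℕ)) →
        a k ^ p ≤ a k ^ r * (S / ((n:ℝ) + 1)) ^ ((p - r) / r) := by
      intro k hk
      have hkn : n ≤ (k : ℕ) := by simpa using hk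
      have hmk : m ≤ k := by simp [Fin.le_def, hm, hkn]
      have hak : a k ≤ a m := hmono m k hmk
      rcases eq_or_lt_of_le (ha k) with h0 | h0
      · rw [← h0, Real.zero_rpow hp.ne', Real.zero_rpow hr.ne']
        positivity
      · have e1 : a k ^ p = a k ^ r * a k ^ (p - r) := by
          rw [← Real.rpow_add h0]; ring_nf
        rw [e1]
        apply mul_le_mul_of_nonneg_left _ (Real.rpow_nonneg (ha k) r)
        calc a k ^ (p - r) ≤ a m ^ (p - r) :=
              Real.rpow_le_rpow (ha k) hak (by linarith)
          _ = (a m ^ r) ^ ((p - r) / r) := by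
              rw [← Real.rpow_mul (ha m)]
              congr 1
              field_simp
          _ ≤ (S / ((n:ℝ) + 1)) ^ ((p - r) / r) :=
              Real.rpow_le_rpow (Real.rpow_nonneg (ha m) r) hdiv hq0
    have hsum : ∑ k ∈ univ.filter (fun k : Fin N => n ≤ (k : ℕ)), a k ^ p ≤
        S * (S / ((n:ℝ) + 1)) ^ ((p - r) / r) := by
      calc ∑ k ∈ univ.filter (fun k : Fin N => n ≤ (k : ℕ)), a k ^ p
          ≤ ∑ k ∈ univ.filter (fun k : Fin N => n ≤ (k : ℕ)),
              a k ^ r * (S / ((n:ℝ) + 1)) ^ ((p - r) / r) :=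
            Finset.sum_le_sum hterm
        _ = (∑ k ∈ univ.filter (fun k : Fin N => n ≤ (k : ℕ)), a k ^ r)
              * (S / ((n:ℝ) + 1)) ^ ((p - r) / r) := by
            rw [← Finset.sum_mul]
        _ ≤ S * (S / ((n:ℝ) + 1)) ^ ((p - r) / r) := by
            apply mul_le_mul_of_nonneg_right _ (Real.rpow_nonneg (by positivity) _)
            apply Finset.sum_le_sum_of_subset_of_nonneg (Finset.subset_univ _)
            intro i _ _
            exact Real.rpow_nonneg (ha i) r
    have hfinal : S * (S / ((n:ℝ) + 1)) ^ ((p - r) / r)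
        = S ^ (p / r) * ((n:ℝ) + 1) ^ (1 - p / r) := by
      rw [Real.div_rpow hS0 hn1.le]
      have e1 : S * (S ^ ((p - r) / r) / ((n:ℝ) + 1) ^ ((p - r) / r))
          = (S * S ^ ((p - r) / r)) * (((n:ℝ) + 1) ^ ((p - r) / r))⁻¹ := by ring
      rw [e1]
      have e2 : S * S ^ ((p - r) / r) = S ^ (p / r) := by
        nth_rewrite 1 [← Real.rpow_one S]
        rw [← Real.rpow_add hS]
        congr 1
        field_simp
        ring
      have e3 : (((n:ℝ) + 1) ^ ((p - r) / r))⁻¹ = ((n:ℝ) + 1) ^ (1 - p / r) := by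
        rw [← Real.rpow_neg hn1.le]
        congr 1
        field_simp
        ring
      rw [e2, e3]
    exact hfinal ▸ hsum
end

section
/- Let p ≥ 1, let C_j > 0, x₀ ≥ 0, and let Z be a nonnegative random variable such that for all v > 0, P(Z > A + C_j·(x₀ + v)^{p/2}) ≤ 2 e^{−(x₀+v)} for some constant A ≥ 0. Then ∫_0^∞ P(Z − A − C_j·2^{(p−2)₊/2} x₀^{p/2} > u) du ≤ C(p)·C_j·e^{−x₀}, where C(p) depends only on p. -/
open Real MeasureTheory
open Set

lemma aux_rpow_add {r : ℝ} (hr : 0 < r) {a b : ℝ} (ha : 0 ≤ a) (hb : 0 ≤ b) :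
    (a + b) ^ r ≤ 2 ^ max (r - 1) 0 * (a ^ r + b ^ r) := by
  rcases le_or_gt r 1 with h1 | h1
  · rw [max_eq_right (by linarith), rpow_zero, one_mul]
    have h := NNReal.rpow_add_le_add_rpow a.toNNReal b.toNNReal hr.le h1
    calc (a + b) ^ r = (((a.toNNReal + b.toNNReal) ^ r : NNReal) : ℝ) := by
          push_cast [NNReal.coe_rpow, Real.coe_toNNReal _ ha, Real.coe_toNNReal _ hb]; rfl
      _ ≤ ((a.toNNReal ^ r + b.toNNReal ^ r : NNReal) : ℝ) := by exact_mod_cast h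
      _ = a ^ r + b ^ r := by
          push_cast [NNReal.coe_rpow, Real.coe_toNNReal _ ha, Real.coe_toNNReal _ hb]; rfl
  · rw [max_eq_left (by linarith)]
    have h := NNReal.rpow_add_le_mul_rpow_add_rpow a.toNNReal b.toNNReal h1.le
    calc (a + b) ^ r = (((a.toNNReal + b.toNNReal) ^ r : NNReal) : ℝ) := by
          push_cast [NNReal.coe_rpow, Real.coe_toNNReal _ ha, Real.coe_toNNReal _ hb]; rfl
      _ ≤ (((2 : NNReal) ^ (r - 1) * (a.toNNReal ^ r + b.toNNReal ^ r) : NNReal) : ℝ) := by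
          exact_mod_cast h
      _ = 2 ^ (r - 1) * (a ^ r + b ^ r) := by
          push_cast [NNReal.coe_rpow, Real.coe_toNNReal _ ha, Real.coe_toNNReal _ hb]; rfl

-- integrability of exp(-b x^q) on Ioi 0, for 0 < q, 0 < b
lemma aux_integrable {q b : ℝ} (hq : 0 < q) (hb : 0 < b) :
    IntegrableOn (fun u : ℝ => Real.exp (-b * u ^ q)) (Ioi 0) := by
  set r : ℝ := 1 / q with hrdef
  have hr : 0 < r := by positivity
  have h1 : IntegrableOn (fun x : ℝ => Real.exp (-x ^ q)) (Ioi 0) := by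
    rw [← integrableOn_Ioi_comp_rpow_iff' (fun x : ℝ => Real.exp (-x ^ q)) hr.ne']
    have : EqOn (fun x : ℝ => x ^ (r - 1) • Real.exp (-(x ^ r) ^ q))
        (fun x : ℝ => Real.exp (-x) * x ^ (r - 1)) (Ioi 0) := by
      intro x hx
      simp only [smul_eq_mul]
      rw [← Real.rpow_mul (le_of_lt hx), one_div_mul_cancel hq.ne', Real.rpow_one, mul_comm]
    exact ((Real.GammaIntegral_convergent hr).congr_fun this.symm measurableSet_Ioi)
  set c : ℝ := b ^ r with hcdef
  have hc : 0 < c := by positivity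
  have h2 := (integrableOn_Ioi_comp_mul_left_iff (fun x : ℝ => Real.exp (-x ^ q)) 0 hc).mpr
    (by rwa [mul_zero])
  refine h2.congr_fun (fun x hx => ?_) measurableSet_Ioi
  have hx0 : (0:ℝ) ≤ x := le_of_lt hx
  show Real.exp (-(c * x) ^ q) = Real.exp (-b * x ^ q)
  rw [Real.mul_rpow hc.le hx0, ← Real.rpow_mul hb.le, one_div_mul_cancel hq.ne',
    Real.rpow_one, neg_mul]


/-- For `p ≥ 1` there is a constant `C(p)` such that for any nonnegative random
variable `Z` satisfying, for all `v > 0`,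
`P(Z > A + C_j (x₀+v)^{p/2}) ≤ 2 e^{−(x₀+v)}`, one has
`∫_0^∞ P(Z − A − C_j 2^{(p−2)₊/2} x₀^{p/2} > u) du ≤ C(p) C_j e^{−x₀}`. -/
theorem stmt11 (p : ℝ) (hp : 1 ≤ p) :
    ∃ Cp : ℝ, 0 < Cp ∧
      ∀ {Ω : Type} [MeasurableSpace Ω] (P : Measure Ω) [IsProbabilityMeasure P]
        (Z : Ω → ℝ) (A Cj x₀ : ℝ),
        (∀ ω, 0 ≤ Z ω) → 0 ≤ A → 0 < Cj → 0 ≤ x₀ →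
        (∀ v : ℝ, 0 < v →
          P {ω | A + Cj * (x₀ + v) ^ (p / 2) < Z ω} ≤
            ENNReal.ofReal (2 * Real.exp (-(x₀ + v)))) →
        ∫ u in Set.Ioi (0 : ℝ),
            (P {ω | A + Cj * 2 ^ (max (p - 2) 0 / 2) * x₀ ^ (p / 2) + u < Z ω}).toReal
          ≤ Cp * Cj * Real.exp (-x₀) := by
  have hp0 : 0 < p := by linarith
  have hr : 0 < p / 2 := by linarith
  refine ⟨2 * 2 ^ (p / 2) * Real.Gamma (p / 2 + 1), by positivity, ?_⟩
  intro Ω _ P _ Z A Cj x₀ hZ hA hCj hx₀ htail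
  set α : ℝ := max (p - 2) 0 / 2 with hαdef
  have hα_eq : α = max (p / 2 - 1) 0 := by
    rw [hαdef, ← max_div_div_right (by norm_num : (0:ℝ) ≤ 2)]
    norm_num
    congr 1 <;> ring
  set D : ℝ := Cj * 2 ^ α with hDdef
  have hD : 0 < D := by positivity
  set q : ℝ := 2 / p with hqdef
  have hq : 0 < q := by positivity
  have hqr : q * (p / 2) = 1 := by rw [hqdef]; field_simp
  set b : ℝ := (1 / D) ^ q with hbdef
  have hb : 0 < b := by positivity
  -- value of b ^ (p/2)
  have hbr : b ^ (p / 2) = 1 / D := by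
    rw [hbdef, ← Real.rpow_mul (by positivity), hqr, Real.rpow_one]
  set g : ℝ → ℝ := fun u => 2 * Real.exp (-x₀) * Real.exp (-b * u ^ q) with hgdef
  have hgint : IntegrableOn g (Ioi 0) := (aux_integrable hq hb).const_mul _
  have hmono : ∀ u ∈ Ioi (0:ℝ),
      (P {ω | A + Cj * 2 ^ α * x₀ ^ (p / 2) + u < Z ω}).toReal ≤ g u := by
    intro u hu
    have hu0 : (0:ℝ) < u := hu
    set v : ℝ := b * u ^ q with hvdef
    have hv : 0 < v := by positivity
    have hvr : D * v ^ (p / 2) = u := by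
      rw [hvdef, Real.mul_rpow hb.le (by positivity), hbr, ← Real.rpow_mul hu0.le, hqr,
        Real.rpow_one]
      field_simp
    have hkey : Cj * (x₀ + v) ^ (p / 2) ≤ Cj * 2 ^ α * x₀ ^ (p / 2) + u := by
      have h := aux_rpow_add hr hx₀ hv.le
      rw [← hα_eq] at h
      calc Cj * (x₀ + v) ^ (p / 2) ≤ Cj * (2 ^ α * (x₀ ^ (p / 2) + v ^ (p / 2))) :=
            mul_le_mul_of_nonneg_left h hCj.le
        _ = Cj * 2 ^ α * x₀ ^ (p / 2) + D * v ^ (p / 2) := by rw [hDdef]; ring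
        _ = Cj * 2 ^ α * x₀ ^ (p / 2) + u := by rw [hvr]
    have hsub : {ω | A + Cj * 2 ^ α * x₀ ^ (p / 2) + u < Z ω} ⊆
        {ω | A + Cj * (x₀ + v) ^ (p / 2) < Z ω} := by
      intro ω hω
      simp only [Set.mem_setOf_eq] at hω ⊢
      linarith
    have hPle : P {ω | A + Cj * 2 ^ α * x₀ ^ (p / 2) + u < Z ω} ≤
        ENNReal.ofReal (2 * Real.exp (-(x₀ + v))) :=
      le_trans (measure_mono hsub) (htail v hv)
    have := ENNReal.toReal_le_of_le_ofReal (by positivity) hPle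
    refine this.trans_eq ?_
    rw [hgdef]
    simp only
    rw [neg_add, Real.exp_add, hvdef, neg_mul]
    ring
  have h0 : (0 : ℝ → ℝ) ≤ᵐ[volume.restrict (Ioi 0)]
      fun u => (P {ω | A + Cj * 2 ^ α * x₀ ^ (p / 2) + u < Z ω}).toReal :=
    Filter.Eventually.of_forall fun u => by
      simp only [Pi.zero_apply]; exact ENNReal.toReal_nonneg
  have hle := ae_restrict_of_forall_mem (μ := volume) measurableSet_Ioi hmono
  calc ∫ u in Ioi (0:ℝ), (P {ω | A + Cj * 2 ^ α * x₀ ^ (p / 2) + u < Z ω}).toReal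
      ≤ ∫ u in Ioi (0:ℝ), g u := integral_mono_of_nonneg h0 hgint hle
    _ = 2 * Real.exp (-x₀) * (b ^ (-1 / q) * Real.Gamma (1 / q + 1)) := by
        rw [hgdef]
        simp only
        rw [MeasureTheory.integral_const_mul, integral_exp_neg_mul_rpow hq hb]
    _ = 2 * Real.exp (-x₀) * (D * Real.Gamma (p / 2 + 1)) := by
        congr 2
        · rw [show (-1 : ℝ) / q = -(p / 2) by rw [hqdef]; field_simp,
            Real.rpow_neg hb.le, hbr]
          field_simp
        · congr 2
          rw [hqdef]; field_simp
    _ ≤ 2 * 2 ^ (p / 2) * Real.Gamma (p / 2 + 1) * Cj * Real.exp (-x₀) := by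
        have hαle : α ≤ p / 2 := by
          rw [hαdef]
          have : max (p - 2) 0 ≤ p := max_le (by linarith) hp0.le
          linarith
        have h2 : (2:ℝ) ^ α ≤ 2 ^ (p / 2) :=
          Real.rpow_le_rpow_of_exponent_le one_le_two hαle
        have hG : 0 ≤ Real.Gamma (p / 2 + 1) := by positivity
        have hD2 : D ≤ Cj * 2 ^ (p / 2) := by
          rw [hDdef]; exact mul_le_mul_of_nonneg_left h2 hCj.le
        nlinarith [Real.exp_pos (-x₀), mul_le_mul_of_nonneg_right hD2 hG,
          mul_le_mul_of_nonneg_right (mul_le_mul_of_nonneg_right hD2 hG)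
            (le_of_lt (Real.exp_pos (-x₀)))]
end
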